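/- Identification of the changed pairs (case ℓ(i) = 1, ℓ(j) = 0): Let ℓ be a binary label function on a ranked list of N documents and let i < j be positions with ℓ(i) = 1 and ℓ(j) = 0. Then the set of pairs (a, b) with i ≤ a < b ≤ j that are correct for ℓ but not correct for swap_{ij}(ℓ) is exactly the union of the pairs (i, k) with i < k ≤ j and ℓ(k) = 0 and the pairs (k, j) with i ≤ k < j and ℓ(k) = 1, and this set has cardinality j − i. -/

import Mathlib

/-- `(a, b)` is a correct pair for `ℓ`: `a < b`, `ℓ a = 1`, `ℓ b = 0`. -/
def CorrectPair {N : ℕ} (ℓ : Fin N → ℕ) (a b : Fin N) : Prop :=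
  a < b ∧ ℓ a = 1 ∧ ℓ b = 0

instance {N : ℕ} (ℓ : Fin N → ℕ) (a b : Fin N) : Decidable (CorrectPair ℓ a b) := by
  unfold CorrectPair; infer_instance

/-- Identification of the changed pairs (case `ℓ(i) = 1`, `ℓ(j) = 0`): the set of pairs
`(a, b)` with `i ≤ a < b ≤ j` that are correct for `ℓ` but not correct for the swap of
positions `i` and `j` is exactly the union of the pairs `(i, k)` with `i < k ≤ j` and
`ℓ(k) = 0`, and the pairs `(k, j)` with `i ≤ k < j` and `ℓ(k) = 1`; and this set has
cardinality `j − i`. -/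
theorem changed_pairs_identification {N : ℕ} (ℓ : Fin N → ℕ)
    (hbin : ∀ k, ℓ k = 0 ∨ ℓ k = 1)
    (i j : Fin N) (hij : i < j) (hi : ℓ i = 1) (hj : ℓ j = 0) :
    (Finset.univ.filter (fun p : Fin N × Fin N =>
        i ≤ p.1 ∧ p.1 < p.2 ∧ p.2 ≤ j ∧
        CorrectPair ℓ p.1 p.2 ∧ ¬ CorrectPair (ℓ ∘ Equiv.swap i j) p.1 p.2)) =
      (Finset.univ.filter (fun p : Fin N × Fin N =>
          p.1 = i ∧ i < p.2 ∧ p.2 ≤ j ∧ ℓ p.2 = 0)) ∪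
      (Finset.univ.filter (fun p : Fin N × Fin N =>
          p.2 = j ∧ i ≤ p.1 ∧ p.1 < j ∧ ℓ p.1 = 1)) ∧
    (Finset.univ.filter (fun p : Fin N × Fin N =>
        i ≤ p.1 ∧ p.1 < p.2 ∧ p.2 ≤ j ∧
        CorrectPair ℓ p.1 p.2 ∧ ¬ CorrectPair (ℓ ∘ Equiv.swap i j) p.1 p.2)).card =
      j.val - i.val := by
  have hij' : i ≠ j := ne_of_lt hij
  have hset : (Finset.univ.filter (fun p : Fin N × Fin N =>
        i ≤ p.1 ∧ p.1 < p.2 ∧ p.2 ≤ j ∧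
        CorrectPair ℓ p.1 p.2 ∧ ¬ CorrectPair (ℓ ∘ Equiv.swap i j) p.1 p.2)) =
      (Finset.univ.filter (fun p : Fin N × Fin N =>
          p.1 = i ∧ i < p.2 ∧ p.2 ≤ j ∧ ℓ p.2 = 0)) ∪
      (Finset.univ.filter (fun p : Fin N × Fin N =>
          p.2 = j ∧ i ≤ p.1 ∧ p.1 < j ∧ ℓ p.1 = 1)) := by
    ext ⟨a, b⟩
    simp only [Finset.mem_filter, Finset.mem_union, Finset.mem_univ, true_and]
    simp only [CorrectPair, Function.comp_apply]
    constructor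
    · rintro ⟨hia, hab, hbj, ⟨-, ha1, hb0⟩, hnot⟩
      by_cases hai : a = i
      · exact Or.inl ⟨hai, hai ▸ hab, hbj, hb0⟩
      by_cases hbj' : b = j
      · exact Or.inr ⟨hbj', hia, hbj' ▸ hab, ha1⟩
      exfalso
      apply hnot
      refine ⟨hab, ?_, ?_⟩
      · rw [Equiv.swap_apply_of_ne_of_ne hai (ne_of_lt (lt_of_lt_of_le hab hbj))]; exact ha1
      · rw [Equiv.swap_apply_of_ne_of_ne (ne_of_gt (lt_of_le_of_lt hia hab)) hbj']; exact hb0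
    · rintro (⟨rfl, hib, hbj, hb0⟩ | ⟨rfl, hia, haj, ha1⟩)
      · refine ⟨le_refl _, hib, hbj, ⟨hib, hi, hb0⟩, ?_⟩
        rintro ⟨-, hs1, -⟩
        rw [Equiv.swap_apply_left] at hs1
        omega
      · refine ⟨hia, haj, le_refl _, ⟨haj, ha1, hj⟩, ?_⟩
        rintro ⟨-, -, hs0⟩
        rw [Equiv.swap_apply_right] at hs0
        omega
  refine ⟨hset, ?_⟩
  rw [hset]
  have hcard : ((Finset.univ.filter (fun p : Fin N × Fin N =>
          p.1 = i ∧ i < p.2 ∧ p.2 ≤ j ∧ ℓ p.2 = 0)) ∪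
      (Finset.univ.filter (fun p : Fin N × Fin N =>
          p.2 = j ∧ i ≤ p.1 ∧ p.1 < j ∧ ℓ p.1 = 1))).card = (Finset.Ico i j).card := by
    apply Finset.card_bij' (fun p _ => if p.2 = j then p.1 else p.2)
      (fun k _ => if ℓ k = 1 then (k, j) else (i, k))
    · rintro ⟨a, b⟩ hm
      simp only [Finset.mem_filter, Finset.mem_union, Finset.mem_univ, true_and] at hm
      simp only [Finset.mem_Ico]
      rcases hm with ⟨rfl, hib, hbj, hb0⟩ | ⟨rfl, hia, haj, ha1⟩
      · split_ifs with h
        · exact ⟨le_refl _, hij⟩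
        · exact ⟨le_of_lt hib, lt_of_le_of_ne hbj h⟩
      · simp only [if_pos rfl]
        exact ⟨hia, haj⟩
    · intro k hk
      simp only [Finset.mem_Ico] at hk
      simp only [Finset.mem_filter, Finset.mem_union, Finset.mem_univ, true_and]
      split_ifs with h
      · exact Or.inr ⟨rfl, hk.1, hk.2, h⟩
      · have hk0 : ℓ k = 0 := (hbin k).resolve_right h
        have hki : k ≠ i := by rintro rfl; omega
        exact Or.inl ⟨rfl, lt_of_le_of_ne hk.1 (Ne.symm hki), le_of_lt hk.2, hk0⟩
    · rintro ⟨a, b⟩ hm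
      simp only [Finset.mem_filter, Finset.mem_union, Finset.mem_univ, true_and] at hm
      rcases hm with ⟨rfl, hib, hbj, hb0⟩ | ⟨rfl, hia, haj, ha1⟩
      · by_cases h : b = j
        · simp [h, hi]
        · simp only [if_neg h]
          have : ℓ b ≠ 1 := by omega
          simp [this, h]
      · simp [ha1]
    · intro k hk
      simp only [Finset.mem_Ico] at hk
      have hkj : k ≠ j := ne_of_lt hk.2
      split_ifs <;> simp_all
  rw [hcard, Fin.card_Ico]
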